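/- Given a directed container (S ◁ P, ↓, o, ⊕), the functor D X = Σ s : S, (P s → X) with counit ε (s, v) = v (o {s}) and comultiplication δ (s, v) = (s, λ p, (s ↓ p, λ p', v (p ⊕ p'))) forms a comonad, i.e., ε and δ satisfy the left counit, right counit, and coassociativity laws. -/

import Mathlib

/-- A directed container `(S ◁ P, ↓, o, ⊕)`. The laws involving positions whose
types only agree propositionally (laws 4 and 5) are stated with `HEq`. -/
structure DCont where
  S : Type
  P : S → Type
  dn : ∀ s : S, P s → S
  root : ∀ s : S, P s
  add : ∀ (s : S) (p : P s), P (dn s p) → P s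
  law1 : ∀ s : S, dn s (root s) = s
  law2 : ∀ (s : S) (p : P s) (p' : P (dn s p)), dn s (add s p p') = dn (dn s p) p'
  law3 : ∀ (s : S) (p : P s), add s p (root (dn s p)) = p
  law4 : ∀ (s : S) (p : P s) (phat : P (dn s (root s))),
    HEq p phat → add s (root s) phat = p
  law5 : ∀ (s : S) (p : P s) (p' : P (dn s p))
    (q : P (dn s (add s p p'))) (q' : P (dn (dn s p) p')),
    HEq q q' → add s (add s p p') q = add s p (add (dn s p) p' q')

/-- The carrier of the interpretation: `D X = Σ s : S, P s → X`. -/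
def DCont.W (E : DCont) (X : Type) : Type := Σ s : E.S, E.P s → X

/-- Functorial action of the carrier. -/
def DCont.wmap (E : DCont) {X Y : Type} (f : X → Y) : E.W X → E.W Y :=
  fun x => ⟨x.1, f ∘ x.2⟩

/-- Counit: `ε (s, v) = v o`. -/
def DCont.eps (E : DCont) {X : Type} : E.W X → X :=
  fun x => x.2 (E.root x.1)

/-- Comultiplication: `δ (s, v) = (s, λ p, (s ↓ p, λ p', v (p ⊕ p')))`. -/
def DCont.del (E : DCont) {X : Type} : E.W X → E.W (E.W X) :=
  fun x => ⟨x.1, fun p => ⟨E.dn x.1 p, fun p' => x.2 (E.add x.1 p p')⟩⟩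

/-- The interpretation of a directed container is a comonad: `ε` and `δ`
satisfy the right counit, left counit, and coassociativity laws. -/
theorem directed_container_interpretation_is_comonad (E : DCont) (X : Type) :
    (∀ x : E.W X, E.wmap E.eps (E.del x) = x) ∧
    (∀ x : E.W X, E.eps (E.del x) = x) ∧
    (∀ x : E.W X, E.wmap E.del (E.del x) = E.del (E.del x)) := by
  refine ⟨?_, ?_, ?_⟩
  · rintro ⟨s, v⟩
    simp only [DCont.wmap, DCont.del, DCont.eps]
    congr 1
    funext p
    show E.eps ⟨E.dn s p, fun p' => v (E.add s p p')⟩ = v p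
    simp [DCont.eps, E.law3]
  · rintro ⟨s, v⟩
    simp only [DCont.del, DCont.eps]
    refine Sigma.ext (E.law1 s) ?_
    refine Function.hfunext (congrArg E.P (E.law1 s)) ?_
    intro p p' hp
    dsimp only
    rw [E.law4 s p' p hp.symm]
  · rintro ⟨s, v⟩
    simp only [DCont.wmap, DCont.del, Function.comp_def]
    congr 1
    funext p
    refine Sigma.ext rfl ?_
    refine heq_of_eq ?_
    funext p'
    dsimp only
    refine Sigma.ext (E.law2 s p p').symm ?_
    refine Function.hfunext (congrArg E.P (E.law2 s p p').symm) ?_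
    intro q' q hq
    dsimp only
    show v (E.add s p (E.add (E.dn s p) p' q')) ≍ _
    rw [E.law5 s p p' q q' hq.symm]
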